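/- Let (v, i) be a pivot such that v has a left child v.L in CT(P) and mfi(v,i) ≠ [-∞,∞]. Then L(v, i) = max{ ℓ : [ℓ, r] ∈ LFI'(v, i), r < i }, i.e., the left endpoint of the minimal fixed-interval with pivot (v,i) is attained among the inclusion-minimal intervals of LFI(v,i) whose right endpoint is less than i. -/

import Mathlib

/-- Ordered binary trees (possibly empty). -/
inductive BTree : Type
  | nil : BTree
  | node : BTree → BTree → BTree
  deriving DecidableEq

/-- The minimum value of a list of integers (with default `0` for the empty list). -/
noncomputable def minval (l : List ℤ) : ℤ := WithTop.untopD 0 l.minimum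

/-- The 0-based index of the leftmost occurrence of the minimum value. -/
noncomputable def minidx0 (l : List ℤ) : ℕ := l.idxOf (minval l)

theorem minidx0_lt_length {l : List ℤ} (h : l ≠ []) : minidx0 l < l.length := by
  obtain ⟨a, ha⟩ := WithTop.ne_top_iff_exists.mp (List.minimum_ne_top_of_ne_nil h)
  have hmem : a ∈ l := List.minimum_mem ha.symm
  have hval : minval l = a := by simp [minval, ← ha]
  rw [minidx0, hval]
  exact List.idxOf_lt_length_iff.mpr hmem

/-- The Cartesian tree of a string of integers. -/
noncomputable def CT (l : List ℤ) : BTree :=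
  if h : l = [] then .nil
  else .node (CT (l.take (minidx0 l))) (CT (l.drop (minidx0 l + 1)))
termination_by l.length
decreasing_by
  · have := minidx0_lt_length h
    simp [List.length_take]
    omega
  · have : 0 < l.length := List.length_pos_iff.mpr h
    simp [List.length_drop]
    omega

/-- The value of the 1-based position `i` of the string `T` (default `0`). -/
def val (T : List ℤ) (i : ℕ) : ℤ := T.getD (i - 1) 0

/-- `IsSubSeq n m I` : `I` is a strictly increasing sequence of `m` subscripts in `[1, n]`. -/
def IsSubSeq (n m : ℕ) (I : List ℕ) : Prop :=
  I.length = m ∧ I.Pairwise (· < ·) ∧ ∀ j ∈ I, 1 ≤ j ∧ j ≤ n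

/-- The subsequence `T_I` of `T` selected by the (1-based) subscript sequence `I`. -/
def seqAt (T : List ℤ) (I : List ℕ) : List ℤ := I.map (val T)

/-- The substring `P[a..b]` of `P` (1-based, inclusive). -/
def subslice (P : List ℤ) (a b : ℕ) : List ℤ := (P.take b).drop (a - 1)

/-- The left end of the maximal interval around position `v` in which `P[v]` is minimal:
one plus the rightmost position `j < v` carrying a value smaller than `P[v]` (or `1`). -/
def leftEnd (P : List ℤ) (v : ℕ) : ℕ :=
  (WithBot.unbotD 0 ((Finset.Icc 1 (v - 1)).filter (fun j => val P j < val P v)).max) + 1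

/-- The right end of the maximal interval around position `v` in which `P[v]` is minimal:
the leftmost position `j > v` carrying a value smaller than `P[v]`, minus one (or `|P|`). -/
def rightEnd (P : List ℤ) (v : ℕ) : ℕ :=
  (WithTop.untopD (P.length + 1)
    ((Finset.Icc (v + 1) P.length).filter (fun j => val P j < val P v)).min) - 1

/-- `P_v`: the substring of `P` spanned by the subtree of `CT(P)` rooted at node `v`
(nodes are identified with 1-based positions of `P`). -/
def Psub (P : List ℤ) (v : ℕ) : List ℤ := subslice P (leftEnd P v) (rightEnd P v)

/-- The left child `v.L` of node `v` in `CT(P)` (as a 1-based position), if it exists. -/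
noncomputable def leftChild (P : List ℤ) (v : ℕ) : Option ℕ :=
  if leftEnd P v < v then some (leftEnd P v + minidx0 (subslice P (leftEnd P v) (v - 1)))
  else none

/-- The right child `v.R` of node `v` in `CT(P)` (as a 1-based position), if it exists. -/
noncomputable def rightChild (P : List ℤ) (v : ℕ) : Option ℕ :=
  if v < rightEnd P v then some (v + 1 + minidx0 (subslice P (v + 1) (rightEnd P v)))
  else none

/-- `[ℓ, r]` is a fixed-interval with pivot `(v, i)`. -/
def IsFixedInterval (T P : List ℤ) (v i ℓ r : ℕ) : Prop :=
  1 ≤ ℓ ∧ r ≤ T.length ∧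
    ∃ I : List ℕ, IsSubSeq T.length (Psub P v).length I ∧ i ∈ I ∧
      (∀ j ∈ I, ℓ ≤ j ∧ j ≤ r) ∧ CT (seqAt T I) = CT (Psub P v) ∧
      val T i = minval (seqAt T I)

/-- `IntervalSsubset (ℓ', r') (ℓ, r)` : the interval `[ℓ', r']` is strictly contained
in the interval `[ℓ, r]`. -/
def IntervalSsubset (p q : ℕ × ℕ) : Prop := q.1 ≤ p.1 ∧ p.2 ≤ q.2 ∧ p ≠ q

/-- `[ℓ, r]` is a minimal fixed-interval with pivot `(v, i)`. -/
def IsMinFixedInterval (T P : List ℤ) (v i ℓ r : ℕ) : Prop :=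
  IsFixedInterval T P v i ℓ r ∧
    ¬∃ ℓ' r', IsFixedInterval T P v i ℓ' r' ∧ IntervalSsubset (ℓ', r') (ℓ, r)

open Classical in
/-- The left endpoint `L(v, i)` of the minimal fixed-interval `mfi(v, i)`,
which is `-∞` (i.e. `⊥`) if no (minimal) fixed-interval with pivot `(v, i)` exists. -/
noncomputable def mfiL (T P : List ℤ) (v i : ℕ) : WithBot ℕ :=
  if h : ∃ ℓ r, IsMinFixedInterval T P v i ℓ r then (h.choose : WithBot ℕ) else ⊥

open Classical in
/-- The right endpoint `R(v, i)` of the minimal fixed-interval `mfi(v, i)`,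
which is `∞` (i.e. `⊤`) if no (minimal) fixed-interval with pivot `(v, i)` exists. -/
noncomputable def mfiR (T P : List ℤ) (v i : ℕ) : WithTop ℕ :=
  if h : ∃ ℓ r, IsMinFixedInterval T P v i ℓ r then (h.choose_spec.choose : WithTop ℕ) else ⊤

/-- `I` is a trace of pattern `P` in text `T`. -/
def IsTrace (T P : List ℤ) (I : List ℕ) : Prop :=
  IsSubSeq T.length P.length I ∧ CT (seqAt T I) = CT P

/-- `[ℓ, r]` is an occurrence interval for `P` over `T`. -/
def IsOccInterval (T P : List ℤ) (ℓ r : ℕ) : Prop :=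
  1 ≤ ℓ ∧ r ≤ T.length ∧ ∃ I, IsTrace T P I ∧ ∀ j ∈ I, ℓ ≤ j ∧ j ≤ r

/-- `[ℓ, r]` is a minimal occurrence interval for `P` over `T`. -/
def IsMinOccInterval (T P : List ℤ) (ℓ r : ℕ) : Prop :=
  IsOccInterval T P ℓ r ∧
    ¬∃ ℓ' r', IsOccInterval T P ℓ' r' ∧ IntervalSsubset (ℓ', r') (ℓ, r)


/-- `LFI(v, i)` for a node `v` with left child `v.L = u`: the set of candidate intervals
`[L(v.L, j), R(v.L, j)]` for `1 ≤ j ≤ n` with `T[i] < T[j]`. -/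
def LFI (T P : List ℤ) (u i : ℕ) : Set (WithBot ℕ × WithTop ℕ) :=
  { p | ∃ j, 1 ≤ j ∧ j ≤ T.length ∧ val T i < val T j ∧
      p = (mfiL T P u j, mfiR T P u j) }

/-- `LFI'(v, i)`: the intervals of `LFI(v, i)` that are minimal under inclusion within
`LFI(v, i)`, i.e., contain no other interval of `LFI(v, i)` as a proper subset. -/
def LFIMin (T P : List ℤ) (u i : ℕ) : Set (WithBot ℕ × WithTop ℕ) :=
  { p | p ∈ LFI T P u i ∧
      ¬∃ q ∈ LFI T P u i, p.1 ≤ q.1 ∧ q.2 ≤ p.2 ∧ q ≠ p }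

/-! ### Auxiliary lemmas -/

lemma CT_nil' : CT [] = .nil := by rw [CT]; simp

lemma CT_eq_node {l : List ℤ} (h : l ≠ []) :
    CT l = .node (CT (l.take (minidx0 l))) (CT (l.drop (minidx0 l + 1))) := by
  rw [CT]; simp [h]

private def nodes : BTree → ℕ
  | .nil => 0
  | .node a b => nodes a + nodes b + 1

lemma nodes_CT_aux : ∀ n (l : List ℤ), l.length ≤ n → nodes (CT l) = l.length := by
  intro n
  induction n with
  | zero =>
    intro l hl
    have : l = [] := List.eq_nil_of_length_eq_zero (Nat.le_zero.mp hl)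
    subst this; rw [CT_nil']; simp [nodes]
  | succ n ih =>
    intro l hl
    by_cases h : l = []
    · subst h; rw [CT_nil']; simp [nodes]
    · have hk := minidx0_lt_length h
      rw [CT_eq_node h]
      simp only [nodes]
      rw [ih _ (by simp [List.length_take]; omega), ih _ (by simp [List.length_drop]; omega)]
      simp [List.length_take, List.length_drop]
      omega

lemma nodes_CT (l : List ℤ) : nodes (CT l) = l.length := nodes_CT_aux l.length l le_rfl

lemma length_eq_of_CT_eq {l₁ l₂ : List ℤ} (h : CT l₁ = CT l₂) : l₁.length = l₂.length := by
  rw [← nodes_CT l₁, ← nodes_CT l₂, h]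

lemma minval_mem {l : List ℤ} (h : l ≠ []) : minval l ∈ l := by
  obtain ⟨a, ha⟩ := WithTop.ne_top_iff_exists.mp (List.minimum_ne_top_of_ne_nil h)
  have hval : minval l = a := by simp [minval, ← ha]
  rw [hval]; exact List.minimum_mem ha.symm

lemma minval_le {l : List ℤ} {x : ℤ} (hx : x ∈ l) : minval l ≤ x := by
  have h : l ≠ [] := List.ne_nil_of_mem hx
  obtain ⟨a, ha⟩ := WithTop.ne_top_iff_exists.mp (List.minimum_ne_top_of_ne_nil h)
  have hval : minval l = a := by simp [minval, ← ha]
  have h2 : (a : WithTop ℤ) ≤ (x : WithTop ℤ) := ha ▸ List.minimum_le_of_mem' hx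
  rw [hval]; exact_mod_cast h2

lemma minval_eq {l : List ℤ} {x : ℤ} (hx : x ∈ l) (hle : ∀ y ∈ l, x ≤ y) : minval l = x :=
  le_antisymm (minval_le hx) (hle _ (minval_mem (List.ne_nil_of_mem hx)))

lemma indexOf_eq_of_getElem {x : ℤ} : ∀ {l : List ℤ} {k : ℕ} (hk : k < l.length),
    l[k] = x → (∀ j (hj : j < k), l[j]'(by omega) ≠ x) → l.idxOf x = k := by
  intro l
  induction l with
  | nil => intro k hk; simp at hk
  | cons a t ih =>
    intro k hk hkx hj
    cases k with
    | zero =>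
      simp only [List.getElem_cons_zero] at hkx
      subst hkx
      simp [List.idxOf_cons_self]
    | succ k =>
      have ha : a ≠ x := by
        have := hj 0 (Nat.succ_pos _)
        simpa using this
      rw [List.idxOf_cons_ne _ ha]
      have : t.idxOf x = k := by
        refine ih (by simpa using hk) (by simpa using hkx) ?_
        intro j hjk
        have := hj (j+1) (by omega)
        simpa using this
      omega

/-- The element at the min-index is the min value. -/
lemma getElem_minidx0 {l : List ℤ} (h : l ≠ []) :
    l[minidx0 l]'(minidx0_lt_length h) = minval l :=
  List.getElem_idxOf (List.idxOf_lt_length_iff.mpr (minval_mem h))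

lemma minval_append {A B : List ℤ} {x : ℤ} (hA : ∀ y ∈ A, x ≤ y) (hB : ∀ y ∈ B, x ≤ y) :
    minval (A ++ x :: B) = x := by
  refine minval_eq (by simp) ?_
  intro y hy
  rcases List.mem_append.mp hy with h | h
  · exact hA _ h
  · rcases List.mem_cons.mp h with h | h
    · omega
    · exact hB _ h

lemma minidx0_append {A B : List ℤ} {x : ℤ} (hA : ∀ y ∈ A, x < y) (hB : ∀ y ∈ B, x ≤ y) :
    minidx0 (A ++ x :: B) = A.length := by
  rw [minidx0, minval_append (fun y hy => le_of_lt (hA y hy)) hB]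
  refine indexOf_eq_of_getElem (by simp) ?_ ?_
  · rw [List.getElem_append_right (Nat.le_refl _)]
    simp
  intro j hjk
  have hj' : j < (A ++ x :: B).length := by simp; omega
  have : (A ++ x :: B)[j] = A[j]'(hjk) := List.getElem_append_left hjk
  rw [this]
  exact ne_of_gt (hA _ (List.getElem_mem hjk))

lemma CT_append {A B : List ℤ} {x : ℤ} (hA : ∀ y ∈ A, x < y) (hB : ∀ y ∈ B, x < y) :
    CT (A ++ x :: B) = .node (CT A) (CT B) := by
  have hne : A ++ x :: B ≠ [] := by simp
  rw [CT_eq_node hne, minidx0_append hA (fun y hy => le_of_lt (hB y hy))]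
  have h1 : (A ++ x :: B).take A.length = A := List.take_left
  have h2 : (A ++ x :: B).drop (A.length + 1) = B := by
    have hx : A ++ x :: B = (A ++ [x]) ++ B := by simp
    have hl : A.length + 1 = (A ++ [x]).length := by simp
    rw [hx, hl, List.drop_left]
  rw [h1, h2]

lemma val_eq_getElem {T : List ℤ} {a : ℕ} (h1 : 1 ≤ a) (h2 : a ≤ T.length) :
    val T a = T[a-1]'(by omega) := List.getD_eq_getElem _ _ (by omega)

lemma val_inj {T : List ℤ} (hT : T.Nodup) {a b : ℕ} (ha1 : 1 ≤ a) (ha2 : a ≤ T.length)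
    (hb1 : 1 ≤ b) (hb2 : b ≤ T.length) (h : val T a = val T b) : a = b := by
  rw [val_eq_getElem ha1 ha2, val_eq_getElem hb1 hb2] at h
  have := (hT.getElem_inj_iff).mp h
  omega

lemma length_seqAt (T : List ℤ) (I : List ℕ) : (seqAt T I).length = I.length :=
  List.length_map _

lemma sorted_mid {A B : List ℕ} {i : ℕ} (h : (A ++ i :: B).Pairwise (· < ·)) :
    (∀ a ∈ A, a < i) ∧ (∀ b ∈ B, i < b) ∧ A.Pairwise (· < ·) ∧ B.Pairwise (· < ·) := by
  rw [List.pairwise_append] at h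
  obtain ⟨h1, h2, h3⟩ := h
  rw [List.pairwise_cons] at h2
  exact ⟨fun a ha => h3 a ha i (by simp), h2.1, h1, h2.2⟩

lemma sorted_append_mid {A B : List ℕ} {i : ℕ} (hA : A.Pairwise (· < ·)) (hB : B.Pairwise (· < ·))
    (h1 : ∀ a ∈ A, a < i) (h2 : ∀ b ∈ B, i < b) : (A ++ i :: B).Pairwise (· < ·) := by
  rw [List.pairwise_append]
  refine ⟨hA, ?_, ?_⟩
  · rw [List.pairwise_cons]
    exact ⟨h2, hB⟩
  · intro a ha b hb
    rcases List.mem_cons.mp hb with rfl | hb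
    · exact h1 a ha
    · exact lt_trans (h1 a ha) (h2 b hb)

/-- Decomposition of a witness at its minimum. -/
lemma decomp {T : List ℤ} (hT : T.Nodup) {Q : List ℤ} (hQ : Q ≠ []) {I : List ℕ} {i : ℕ}
    (hsort : I.Pairwise (· < ·)) (hbnd : ∀ j ∈ I, 1 ≤ j ∧ j ≤ T.length)
    (hiI : i ∈ I) (hmin : val T i = minval (seqAt T I)) (hct : CT (seqAt T I) = CT Q) :
    ∃ A B, I = A ++ i :: B ∧ A.length = minidx0 Q ∧
      CT (seqAt T A) = CT (Q.take (minidx0 Q)) ∧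
      CT (seqAt T B) = CT (Q.drop (minidx0 Q + 1)) ∧
      (∀ a ∈ A, a < i) ∧ (∀ b ∈ B, i < b) ∧
      (∀ a ∈ A, val T i < val T a) ∧ (∀ b ∈ B, val T i < val T b) ∧
      A.Pairwise (· < ·) ∧ B.Pairwise (· < ·) ∧
      (∀ a ∈ A, 1 ≤ a ∧ a ≤ T.length) ∧ (∀ b ∈ B, 1 ≤ b ∧ b ≤ T.length) := by
  have hne : seqAt T I ≠ [] := by
    have : I ≠ [] := List.ne_nil_of_mem hiI
    simp [seqAt, this]
  set k := minidx0 (seqAt T I) with hkdef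
  have hk : k < I.length := by
    have := minidx0_lt_length hne
    rwa [length_seqAt] at this
  have hnodeI := CT_eq_node hne
  have hnodeQ := CT_eq_node hQ
  rw [hnodeI, hnodeQ] at hct
  injection hct with e1 e2
  -- k = minidx0 Q
  have hkQ : k = minidx0 Q := by
    have heq := length_eq_of_CT_eq e1
    rw [List.length_take, List.length_take, length_seqAt] at heq
    have h2 := minidx0_lt_length hQ
    rw [Nat.min_eq_left (le_of_lt hk), Nat.min_eq_left (le_of_lt h2)] at heq
    exact heq
  -- I[k] = i
  have hgetk : (seqAt T I)[k]'(by rw [length_seqAt]; exact hk) = val T (I[k]) := by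
    simp [seqAt]
  have hmink : (seqAt T I)[k]'(by rw [length_seqAt]; exact hk) = minval (seqAt T I) :=
    getElem_minidx0 hne
  have hIk : I[k] = i := by
    apply val_inj hT (hbnd _ (List.getElem_mem hk)).1 (hbnd _ (List.getElem_mem hk)).2
      (hbnd _ hiI).1 (hbnd _ hiI).2
    rw [← hgetk, hmink, hmin]
  have hsplit : I = I.take k ++ i :: I.drop (k + 1) := by
    conv_lhs => rw [← List.take_append_drop k I]
    congr 1
    rw [← hIk]
    exact List.drop_eq_getElem_cons hk
  have hsortm := hsplit ▸ hsort
  obtain ⟨hlt, hgt, hsA, hsB⟩ := sorted_mid hsortm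
  have hmemA : ∀ a ∈ I.take k, a ∈ I := fun a ha => List.mem_of_mem_take ha
  have hmemB : ∀ b ∈ I.drop (k+1), b ∈ I := fun b hb => List.mem_of_mem_drop hb
  have hvgen : ∀ a ∈ I, a ≠ i → val T i < val T a := by
    intro a ha hne'
    have h1 : minval (seqAt T I) ≤ val T a := minval_le (by simp [seqAt]; exact ⟨a, ha, rfl⟩)
    rw [← hmin] at h1
    rcases lt_or_eq_of_le h1 with h | h
    · exact h
    · exact absurd (val_inj hT (hbnd _ hiI).1 (hbnd _ hiI).2 (hbnd _ ha).1 (hbnd _ ha).2 h)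
        (Ne.symm hne')
  refine ⟨I.take k, I.drop (k+1), hsplit, by rw [List.length_take]; omega, ?_, ?_,
    hlt, hgt, ?_, ?_, hsA, hsB, fun a ha => hbnd _ (hmemA a ha), fun b hb => hbnd _ (hmemB b hb)⟩
  · rw [← hkQ] at e1 ⊢
    have : seqAt T (I.take k) = (seqAt T I).take k := List.map_take
    rw [this]; exact e1
  · rw [← hkQ] at e2 ⊢
    have : seqAt T (I.drop (k+1)) = (seqAt T I).drop (k+1) := List.map_drop
    rw [this]; exact e2
  · exact fun a ha => hvgen a (hmemA a ha) (by have := hlt a ha; omega)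
  · exact fun b hb => hvgen b (hmemB b hb) (by have := hgt b hb; omega)

/-- Composition of witnesses. -/
lemma comp {T : List ℤ} {Q : List ℤ} (hQ : Q ≠ []) {A B : List ℕ} {i : ℕ}
    (hA : CT (seqAt T A) = CT (Q.take (minidx0 Q)))
    (hB : CT (seqAt T B) = CT (Q.drop (minidx0 Q + 1)))
    (hvA : ∀ a ∈ A, val T i < val T a) (hvB : ∀ b ∈ B, val T i < val T b) :
    CT (seqAt T (A ++ i :: B)) = CT Q ∧ val T i = minval (seqAt T (A ++ i :: B)) ∧
      (A ++ i :: B).length = Q.length := by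
  have hseq : seqAt T (A ++ i :: B) = seqAt T A ++ val T i :: seqAt T B := by
    simp [seqAt]
  have hvA' : ∀ y ∈ seqAt T A, val T i < y := by
    intro y hy; obtain ⟨a, ha, rfl⟩ := List.mem_map.mp hy; exact hvA a ha
  have hvB' : ∀ y ∈ seqAt T B, val T i < y := by
    intro y hy; obtain ⟨b, hb, rfl⟩ := List.mem_map.mp hy; exact hvB b hb
  have hlenA : A.length = minidx0 Q := by
    have := length_eq_of_CT_eq hA
    rw [length_seqAt, List.length_take] at this
    have := minidx0_lt_length hQ
    omega
  have hlenB : B.length = Q.length - minidx0 Q - 1 := by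
    have := length_eq_of_CT_eq hB
    rw [length_seqAt, List.length_drop] at this
    omega
  refine ⟨?_, ?_, ?_⟩
  · rw [hseq, CT_append hvA' hvB', hA, hB, ← CT_eq_node hQ]
  · rw [hseq, minval_append (fun y hy => le_of_lt (hvA' y hy)) (fun y hy => le_of_lt (hvB' y hy))]
  · have := minidx0_lt_length hQ
    simp only [List.length_append, List.length_cons]
    omega

lemma untop'_some (d m : ℕ) : WithTop.untopD d (WithTop.some m) = m := rfl
lemma unbot'_some (d m : ℕ) : WithBot.unbotD d (WithBot.some m) = m := rfl

lemma leftEnd_pos (P : List ℤ) (v : ℕ) : 1 ≤ leftEnd P v := by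
  rw [leftEnd]; omega

lemma leftEnd_le {P : List ℤ} {v : ℕ} (hv : 1 ≤ v) : leftEnd P v ≤ v := by
  rw [leftEnd]
  cases hmax : ((Finset.Icc 1 (v-1)).filter (fun j => val P j < val P v)).max with
  | bot => simp [hmax, WithBot.unbotD_bot]; omega
  | coe m =>
    have hm := Finset.mem_of_max hmax
    rw [Finset.mem_filter, Finset.mem_Icc] at hm
    rw [unbot'_some]
    omega

lemma le_rightEnd {P : List ℤ} {v : ℕ} (hv2 : v ≤ P.length) : v ≤ rightEnd P v := by
  rw [rightEnd]
  cases hmin : ((Finset.Icc (v+1) P.length).filter (fun j => val P j < val P v)).min with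
  | top => simp [hmin, WithTop.untopD_top]; omega
  | coe m =>
    have hm := Finset.mem_of_min hmin
    rw [Finset.mem_filter, Finset.mem_Icc] at hm
    rw [untop'_some]
    omega

lemma rightEnd_le {P : List ℤ} (v : ℕ) : rightEnd P v ≤ P.length := by
  rw [rightEnd]
  cases hmin : ((Finset.Icc (v+1) P.length).filter (fun j => val P j < val P v)).min with
  | top => simp [hmin, WithTop.untopD_top]
  | coe m =>
    have hm := Finset.mem_of_min hmin
    rw [Finset.mem_filter, Finset.mem_Icc] at hm
    rw [untop'_some]
    omega

lemma val_v_lt_left {P : List ℤ} (hP : P.Nodup) {v w : ℕ} (hv : 1 ≤ v) (hv2 : v ≤ P.length)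
    (hw1 : leftEnd P v ≤ w) (hw2 : w < v) : val P v < val P w := by
  have hw0 : 1 ≤ w := le_trans (leftEnd_pos P v) hw1
  by_contra hcon
  push_neg at hcon
  have hne : val P w ≠ val P v := fun h =>
    absurd (val_inj hP hw0 (by omega) hv hv2 h) (by omega)
  have hlt : val P w < val P v := lt_of_le_of_ne hcon hne
  have hmem : w ∈ (Finset.Icc 1 (v-1)).filter (fun j => val P j < val P v) := by
    rw [Finset.mem_filter, Finset.mem_Icc]
    have := leftEnd_pos P v
    exact ⟨⟨by omega, by omega⟩, hlt⟩
  have hle := Finset.le_max hmem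
  cases hmax : ((Finset.Icc 1 (v-1)).filter (fun j => val P j < val P v)).max with
  | bot => rw [hmax] at hle; exact absurd hle (by simp)
  | coe m =>
    rw [hmax] at hle
    have hwm : w ≤ m := by exact_mod_cast hle
    rw [leftEnd, hmax] at hw1
    rw [unbot'_some] at hw1
    omega

lemma val_v_lt_right {P : List ℤ} (hP : P.Nodup) {v w : ℕ} (hv : 1 ≤ v) (hv2 : v ≤ P.length)
    (hw1 : v < w) (hw2 : w ≤ rightEnd P v) : val P v < val P w := by
  have hwP : w ≤ P.length := le_trans hw2 (rightEnd_le v)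
  by_contra hcon
  push_neg at hcon
  have hne : val P w ≠ val P v := fun h =>
    absurd (val_inj hP (by omega) (by omega) hv hv2 h) (by omega)
  have hlt : val P w < val P v := lt_of_le_of_ne hcon hne
  have hmem : w ∈ (Finset.Icc (v+1) P.length).filter (fun j => val P j < val P v) := by
    rw [Finset.mem_filter, Finset.mem_Icc]
    exact ⟨⟨by omega, hwP⟩, hlt⟩
  have hle := Finset.min_le hmem
  cases hmin : ((Finset.Icc (v+1) P.length).filter (fun j => val P j < val P v)).min with
  | top => rw [hmin] at hle; exact absurd hle (by simp)
  | coe m =>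
    rw [hmin] at hle
    have hwm : m ≤ w := by exact_mod_cast hle
    have hm := Finset.mem_of_min hmin
    rw [Finset.mem_filter, Finset.mem_Icc] at hm
    rw [rightEnd, hmin] at hw2
    rw [untop'_some] at hw2
    omega

lemma left_boundary {P : List ℤ} {v : ℕ} (h : 1 < leftEnd P v) :
    1 ≤ leftEnd P v - 1 ∧ leftEnd P v - 1 ≤ v - 1 ∧ val P (leftEnd P v - 1) < val P v := by
  cases hmax : ((Finset.Icc 1 (v-1)).filter (fun j => val P j < val P v)).max with
  | bot => rw [leftEnd, hmax] at h ⊢; simp at h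
  | coe m =>
    have hm := Finset.mem_of_max hmax
    rw [Finset.mem_filter, Finset.mem_Icc] at hm
    rw [leftEnd, hmax]
    simp only [WithBot.unbotD_coe]
    simp only [Nat.add_sub_cancel]
    exact ⟨hm.1.1, hm.1.2, hm.2⟩

lemma right_boundary {P : List ℤ} {v : ℕ} (h : rightEnd P v < P.length) :
    v + 1 ≤ rightEnd P v + 1 ∧ rightEnd P v + 1 ≤ P.length ∧
      val P (rightEnd P v + 1) < val P v := by
  cases hmin : ((Finset.Icc (v+1) P.length).filter (fun j => val P j < val P v)).min with
  | top => rw [rightEnd, hmin] at h; simp at h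
  | coe m =>
    have hm := Finset.mem_of_min hmin
    rw [Finset.mem_filter, Finset.mem_Icc] at hm
    rw [rightEnd, hmin]
    simp only [WithTop.untopD_coe]
    have hm1 : 1 ≤ m := by omega
    have : m - 1 + 1 = m := by omega
    rw [this]
    exact ⟨by omega, hm.1.2, hm.2⟩

lemma length_subslice {P : List ℤ} {a b : ℕ} (hb : b ≤ P.length) :
    (subslice P a b).length = b - (a - 1) := by
  rw [subslice, List.length_drop, List.length_take]
  omega

lemma getElem_subslice {P : List ℤ} {a b k : ℕ} (ha : 1 ≤ a) (hb : b ≤ P.length)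
    (hk : k < b - (a - 1)) :
    (subslice P a b)[k]'(by rw [length_subslice hb]; exact hk) = val P (a + k) := by
  simp only [subslice]
  rw [List.getElem_drop]
  rw [List.getElem_take]
  rw [val_eq_getElem (by omega) (by omega)]
  congr 1
  omega

lemma Psub_ne_nil {P : List ℤ} {v : ℕ} (hv1 : 1 ≤ v) (hv2 : v ≤ P.length) :
    Psub P v ≠ [] := by
  have ha1 : 1 ≤ leftEnd P v := leftEnd_pos P v
  have hav : leftEnd P v ≤ v := leftEnd_le hv1
  have hvb : v ≤ rightEnd P v := le_rightEnd hv2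
  have hbP : rightEnd P v ≤ P.length := rightEnd_le v
  intro h
  have := length_subslice (P := P) (a := leftEnd P v) hbP
  rw [Psub] at h
  rw [h] at this
  simp at this
  omega

lemma Psub_structure {P : List ℤ} (hP : P.Nodup) {v u : ℕ} (hv1 : 1 ≤ v) (hv2 : v ≤ P.length)
    (hu : leftChild P v = some u) :
    1 ≤ minidx0 (Psub P v) ∧
      (Psub P v).take (minidx0 (Psub P v)) = Psub P u ∧
      1 ≤ u ∧ u ≤ P.length ∧ Psub P u ≠ [] := by
  have ha1 : 1 ≤ leftEnd P v := leftEnd_pos P v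
  have hav : leftEnd P v ≤ v := leftEnd_le hv1
  have hvb : v ≤ rightEnd P v := le_rightEnd hv2
  have hbP : rightEnd P v ≤ P.length := rightEnd_le v
  rw [leftChild] at hu
  by_cases hlt : leftEnd P v < v
  swap
  · rw [if_neg hlt] at hu; exact absurd hu (by simp)
  rw [if_pos hlt] at hu
  have hu' : u = leftEnd P v + minidx0 (subslice P (leftEnd P v) (v-1)) :=
    (Option.some_injective _ hu).symm
  have hWlen : (subslice P (leftEnd P v) (v-1)).length = v - leftEnd P v := by
    rw [length_subslice (by omega)]; omega
  have hWne : subslice P (leftEnd P v) (v-1) ≠ [] := by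
    intro h; rw [h] at hWlen; simp at hWlen; omega
  have hki : minidx0 (subslice P (leftEnd P v) (v-1)) < v - leftEnd P v := by
    have := minidx0_lt_length hWne; omega
  have hua : leftEnd P v ≤ u := by omega
  have huv : u ≤ v - 1 := by omega
  have hu1 : 1 ≤ u := by omega
  have huP : u ≤ P.length := by omega
  -- value of u is the minimum of the left part
  have hval_u : val P u = minval (subslice P (leftEnd P v) (v-1)) := by
    have h1 := getElem_minidx0 hWne
    have h2 : (subslice P (leftEnd P v) (v-1))[minidx0 (subslice P (leftEnd P v) (v-1))]'(
        minidx0_lt_length hWne) = val P (leftEnd P v + minidx0 (subslice P (leftEnd P v) (v-1))) :=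
      getElem_subslice ha1 (by omega) (by omega)
    rw [hu', ← h1, h2]
  have hmin_u : ∀ w, leftEnd P v ≤ w → w ≤ v - 1 → val P u ≤ val P w := by
    intro w hw1 hw2
    have h3 : (subslice P (leftEnd P v) (v-1))[w - leftEnd P v]'(by rw [hWlen]; omega)
        = val P (leftEnd P v + (w - leftEnd P v)) := getElem_subslice ha1 (by omega) (by omega)
    rw [show leftEnd P v + (w - leftEnd P v) = w from by omega] at h3
    rw [hval_u, ← h3]
    exact minval_le (List.getElem_mem _)
  have hstrict : ∀ w, leftEnd P v ≤ w → w ≤ v - 1 → w ≠ u → val P u < val P w := by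
    intro w hw1 hw2 hwne
    refine lt_of_le_of_ne (hmin_u w hw1 hw2) ?_
    intro h
    exact hwne (val_inj hP hu1 huP (by omega) (by omega) h).symm
  have hvltu : val P v < val P u := val_v_lt_left hP hv1 hv2 hua (by omega)
  -- left end of u equals left end of v
  have hLu : leftEnd P u = leftEnd P v := by
    rw [leftEnd]
    cases hmax : ((Finset.Icc 1 (u-1)).filter (fun j => val P j < val P u)).max with
    | bot =>
      by_cases hA : 1 < leftEnd P v
      · exfalso
        obtain ⟨hb1, hb2, hb3⟩ := left_boundary hA
        have hmem : leftEnd P v - 1 ∈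
            (Finset.Icc 1 (u-1)).filter (fun j => val P j < val P u) := by
          rw [Finset.mem_filter, Finset.mem_Icc]
          exact ⟨⟨hb1, by omega⟩, lt_trans hb3 hvltu⟩
        have := Finset.le_max hmem
        rw [hmax] at this
        exact absurd this (by simp)
      · simp only [WithBot.unbotD_bot]
        omega
    | coe m =>
      have hm := Finset.mem_of_max hmax
      rw [Finset.mem_filter, Finset.mem_Icc] at hm
      have hm_le : m ≤ leftEnd P v - 1 := by
        by_contra hcon2
        push_neg at hcon2
        have := hstrict m (by omega) (by omega) (by omega)
        exact absurd hm.2 (not_lt.mpr (le_of_lt this))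
      have hA : 1 < leftEnd P v := by omega
      obtain ⟨hb1, hb2, hb3⟩ := left_boundary hA
      have hmem : leftEnd P v - 1 ∈
          (Finset.Icc 1 (u-1)).filter (fun j => val P j < val P u) := by
        rw [Finset.mem_filter, Finset.mem_Icc]
        exact ⟨⟨hb1, by omega⟩, lt_trans hb3 hvltu⟩
      have hge := Finset.le_max hmem
      rw [hmax] at hge
      have hge' : leftEnd P v - 1 ≤ m := by exact_mod_cast hge
      rw [unbot'_some]
      omega
  -- right end of u is v - 1
  have hRu : rightEnd P u = v - 1 := by
    rw [rightEnd]
    have hmemv : v ∈ (Finset.Icc (u+1) P.length).filter (fun j => val P j < val P u) := by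
      rw [Finset.mem_filter, Finset.mem_Icc]
      exact ⟨⟨by omega, hv2⟩, hvltu⟩
    cases hmin : ((Finset.Icc (u+1) P.length).filter (fun j => val P j < val P u)).min with
    | top =>
      exfalso
      have := Finset.min_le hmemv
      rw [hmin] at this
      exact absurd this (by simp)
    | coe m =>
      have hm := Finset.mem_of_min hmin
      rw [Finset.mem_filter, Finset.mem_Icc] at hm
      have h1 : m ≤ v := by
        have := Finset.min_le hmemv
        rw [hmin] at this
        exact_mod_cast this
      have h2 : v ≤ m := by
        by_contra hcon2
        push_neg at hcon2
        have := hstrict m (by omega) (by omega) (by omega)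
        exact absurd hm.2 (not_lt.mpr (le_of_lt this))
      rw [untop'_some]
      omega
  have hPu : Psub P u = subslice P (leftEnd P v) (v-1) := by
    rw [Psub, hLu, hRu]
  -- the minimum index of Psub P v
  have hQlen : (Psub P v).length = rightEnd P v - (leftEnd P v - 1) := by
    rw [Psub, length_subslice hbP]
  have hQget : ∀ k, (hk : k < rightEnd P v - (leftEnd P v - 1)) →
      (Psub P v)[k]'(by rw [hQlen]; exact hk) = val P (leftEnd P v + k) := by
    intro k hk
    exact getElem_subslice ha1 hbP hk
  have hvk : v - leftEnd P v < rightEnd P v - (leftEnd P v - 1) := by omega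
  have hvmemget : (Psub P v)[v - leftEnd P v]'(by rw [hQlen]; exact hvk) = val P v := by
    rw [hQget _ hvk]
    congr 1
    omega
  have hmin_v : minval (Psub P v) = val P v := by
    refine minval_eq (hvmemget ▸ List.getElem_mem _) ?_
    intro y hy
    obtain ⟨k, hk, rfl⟩ := List.mem_iff_getElem.mp hy
    rw [hQlen] at hk
    rw [hQget k hk]
    rcases lt_trichotomy (leftEnd P v + k) v with h | h | h
    · exact le_of_lt (val_v_lt_left hP hv1 hv2 (by omega) h)
    · rw [h]
    · exact le_of_lt (val_v_lt_right hP hv1 hv2 h (by omega))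
  have hidx : minidx0 (Psub P v) = v - leftEnd P v := by
    rw [minidx0, hmin_v]
    refine indexOf_eq_of_getElem (by rw [hQlen]; exact hvk) hvmemget ?_
    intro j hj
    rw [hQget j (by omega)]
    exact ne_of_gt (val_v_lt_left hP hv1 hv2 (by omega) (by omega))
  have htake : (Psub P v).take (minidx0 (Psub P v)) = Psub P u := by
    rw [hidx, hPu, Psub, subslice, subslice, List.take_drop, List.take_take]
    rw [show leftEnd P v - 1 + (v - leftEnd P v) = v - 1 from by omega,
      Nat.min_eq_left (by omega)]
  refine ⟨by omega, htake, hu1, huP, ?_⟩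
  rw [hPu]
  exact hWne

/-- Decomposition of a fixed interval witness at the pivot. -/
lemma FI_decomp {T P : List ℤ} (hT : T.Nodup) {v i ℓ r : ℕ}
    (hQ : Psub P v ≠ []) (hfi : IsFixedInterval T P v i ℓ r) :
    ∃ A B : List ℕ,
      CT (seqAt T A) = CT ((Psub P v).take (minidx0 (Psub P v))) ∧
      CT (seqAt T B) = CT ((Psub P v).drop (minidx0 (Psub P v) + 1)) ∧
      (∀ a ∈ A, a < i) ∧ (∀ b ∈ B, i < b) ∧
      (∀ a ∈ A, val T i < val T a) ∧ (∀ b ∈ B, val T i < val T b) ∧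
      A.Pairwise (· < ·) ∧ B.Pairwise (· < ·) ∧
      (∀ a ∈ A, 1 ≤ a ∧ a ≤ T.length) ∧ (∀ b ∈ B, 1 ≤ b ∧ b ≤ T.length) ∧
      (∀ a ∈ A, ℓ ≤ a ∧ a ≤ r) ∧ (∀ b ∈ B, ℓ ≤ b ∧ b ≤ r) ∧
      A.length = minidx0 (Psub P v) ∧
      (1 ≤ i ∧ i ≤ T.length) ∧ (ℓ ≤ i ∧ i ≤ r) := by
  obtain ⟨hℓ, hr, I, ⟨hlen, hsort, hbnd⟩, hiI, hIbnd, hct, hmin⟩ := hfi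
  obtain ⟨A, B, hsplit, hlenA, h2, h3, h4, h5, h6, h7, h8, h9, h10, h11⟩ :=
    decomp hT hQ hsort hbnd hiI hmin hct
  have hmemA : ∀ a ∈ A, a ∈ I := by intro a ha; rw [hsplit]; simp [ha]
  have hmemB : ∀ b ∈ B, b ∈ I := by intro b hb; rw [hsplit]; simp [hb]
  exact ⟨A, B, h2, h3, h4, h5, h6, h7, h8, h9, h10, h11,
    fun a ha => hIbnd a (hmemA a ha), fun b hb => hIbnd b (hmemB b hb), hlenA,
    hbnd i hiI, hIbnd i hiI⟩

/-- Composition of witness halves into a fixed interval. -/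
lemma FI_comp {T P : List ℤ} {v i ℓ r : ℕ} (hQ : Psub P v ≠ []) {A B : List ℕ}
    (h2 : CT (seqAt T A) = CT ((Psub P v).take (minidx0 (Psub P v))))
    (h3 : CT (seqAt T B) = CT ((Psub P v).drop (minidx0 (Psub P v) + 1)))
    (h4 : ∀ a ∈ A, a < i) (h5 : ∀ b ∈ B, i < b)
    (h6 : ∀ a ∈ A, val T i < val T a) (h7 : ∀ b ∈ B, val T i < val T b)
    (h8 : A.Pairwise (· < ·)) (h9 : B.Pairwise (· < ·))
    (h10 : ∀ a ∈ A, 1 ≤ a ∧ a ≤ T.length) (h11 : ∀ b ∈ B, 1 ≤ b ∧ b ≤ T.length)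
    (h12 : ∀ a ∈ A, ℓ ≤ a ∧ a ≤ r) (h13 : ∀ b ∈ B, ℓ ≤ b ∧ b ≤ r)
    (hi : 1 ≤ i ∧ i ≤ T.length) (hℓi : ℓ ≤ i) (hir : i ≤ r)
    (hℓ : 1 ≤ ℓ) (hr : r ≤ T.length) :
    IsFixedInterval T P v i ℓ r := by
  obtain ⟨hctF, hminF, hlenF⟩ := comp hQ h2 h3 h6 h7
  refine ⟨hℓ, hr, A ++ i :: B, ⟨hlenF, sorted_append_mid h8 h9 h4 h5, ?_⟩, by simp, ?_, hctF, hminF⟩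
  · intro j hj
    rcases List.mem_append.mp hj with h | h
    · exact h10 j h
    · rcases List.mem_cons.mp h with rfl | h
      · exact hi
      · exact h11 j h
  · intro j hj
    rcases List.mem_append.mp hj with h | h
    · exact h12 j h
    · rcases List.mem_cons.mp h with rfl | h
      · exact ⟨hℓi, hir⟩
      · exact h13 j h

lemma FI_pivot_mem {T P : List ℤ} {v i ℓ r : ℕ} (h : IsFixedInterval T P v i ℓ r) :
    ℓ ≤ i ∧ i ≤ r := by
  obtain ⟨_, _, I, _, hiI, hb, _, _⟩ := h
  exact hb i hiI

lemma FI_cross {T P : List ℤ} (hT : T.Nodup) {v i : ℕ} (hQ : Psub P v ≠ [])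
    {ℓ0 r0 ℓ1 r1 : ℕ} (h0 : IsFixedInterval T P v i ℓ0 r0)
    (h1 : IsFixedInterval T P v i ℓ1 r1) : IsFixedInterval T P v i ℓ1 r0 := by
  have hr0 := h0.2.1
  have hℓ1 := h1.1
  obtain ⟨hp0, hp0'⟩ := FI_pivot_mem h0
  obtain ⟨hp1, hp1'⟩ := FI_pivot_mem h1
  obtain ⟨A0, B0, g2, g3, g4, g5, g6, g7, g8, g9, g10, g11, g12, g13, _, hi0, _⟩ :=
    FI_decomp hT hQ h0
  obtain ⟨A1, B1, f2, f3, f4, f5, f6, f7, f8, f9, f10, f11, f12, f13, _, _, _⟩ :=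
    FI_decomp hT hQ h1
  refine FI_comp hQ f2 g3 f4 g5 f6 g7 f8 g9 f10 g11 ?_ ?_ hi0 hp1 hp0' hℓ1 hr0
  · intro a ha
    have := f12 a ha
    have := f4 a ha
    omega
  · intro b hb
    have := g13 b hb
    have := g5 b hb
    omega

lemma exists_minFI_aux : ∀ (n : ℕ) {T P : List ℤ} {v i ℓ r : ℕ}, r - ℓ ≤ n →
    IsFixedInterval T P v i ℓ r → ∃ ℓ' r', IsMinFixedInterval T P v i ℓ' r' := by
  intro n
  induction n with
  | zero =>
    intro T P v i ℓ r hn hfi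
    by_cases hmin : ∃ ℓ' r', IsFixedInterval T P v i ℓ' r' ∧ IntervalSsubset (ℓ', r') (ℓ, r)
    · exfalso
      obtain ⟨ℓ', r', hfi', hss⟩ := hmin
      obtain ⟨hp1, hp2⟩ := FI_pivot_mem hfi'
      obtain ⟨hq1, hq2⟩ := FI_pivot_mem hfi
      obtain ⟨hs1, hs2, hs3⟩ := hss
      have hne : ℓ' ≠ ℓ ∨ r' ≠ r := by
        by_contra h
        push_neg at h
        exact hs3 (by rw [Prod.mk.injEq]; exact ⟨h.1, h.2⟩)
      simp only at hs1 hs2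
      omega
    · exact ⟨ℓ, r, hfi, hmin⟩
  | succ n ih =>
    intro T P v i ℓ r hn hfi
    by_cases hmin : ∃ ℓ' r', IsFixedInterval T P v i ℓ' r' ∧ IntervalSsubset (ℓ', r') (ℓ, r)
    · obtain ⟨ℓ', r', hfi', hss⟩ := hmin
      obtain ⟨hp1, hp2⟩ := FI_pivot_mem hfi'
      obtain ⟨hq1, hq2⟩ := FI_pivot_mem hfi
      obtain ⟨hs1, hs2, hs3⟩ := hss
      have hne : ℓ' ≠ ℓ ∨ r' ≠ r := by
        by_contra h
        push_neg at h
        exact hs3 (by rw [Prod.mk.injEq]; exact ⟨h.1, h.2⟩)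
      simp only at hs1 hs2
      exact ih (by omega) hfi'
    · exact ⟨ℓ, r, hfi, hmin⟩

lemma exists_minFI {T P : List ℤ} {v i ℓ r : ℕ} (hfi : IsFixedInterval T P v i ℓ r) :
    ∃ ℓ' r', IsMinFixedInterval T P v i ℓ' r' :=
  exists_minFI_aux (r - ℓ) le_rfl hfi

/-- The minimal fixed interval is contained in every fixed interval. -/
lemma minFI_subset {T P : List ℤ} (hT : T.Nodup) {v i : ℕ} (hQ : Psub P v ≠ [])
    {ℓ0 r0 ℓ1 r1 : ℕ} (hm : IsMinFixedInterval T P v i ℓ0 r0)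
    (hfi : IsFixedInterval T P v i ℓ1 r1) : ℓ1 ≤ ℓ0 ∧ r0 ≤ r1 := by
  constructor
  · by_contra h
    push_neg at h
    have hc := FI_cross hT hQ hm.1 hfi
    exact hm.2 ⟨ℓ1, r0, hc, by
      refine ⟨le_of_lt h, le_rfl, ?_⟩
      rw [Ne, Prod.mk.injEq]
      push_neg
      intro hh
      omega⟩
  · by_contra h
    push_neg at h
    have hc := FI_cross hT hQ hfi hm.1
    exact hm.2 ⟨ℓ0, r1, hc, by
      refine ⟨le_rfl, le_of_lt h, ?_⟩
      rw [Ne, Prod.mk.injEq]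
      push_neg
      intro hh
      omega⟩

lemma minFI_unique {T P : List ℤ} (hT : T.Nodup) {v i : ℕ} (hQ : Psub P v ≠ [])
    {ℓ0 r0 ℓ1 r1 : ℕ} (hm0 : IsMinFixedInterval T P v i ℓ0 r0)
    (hm1 : IsMinFixedInterval T P v i ℓ1 r1) : ℓ0 = ℓ1 ∧ r0 = r1 := by
  obtain ⟨a1, a2⟩ := minFI_subset hT hQ hm0 hm1.1
  obtain ⟨b1, b2⟩ := minFI_subset hT hQ hm1 hm0.1
  omega

lemma mfi_eq {T P : List ℤ} (hT : T.Nodup) {v i ℓ r : ℕ} (hQ : Psub P v ≠ [])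
    (hm : IsMinFixedInterval T P v i ℓ r) :
    mfiL T P v i = (ℓ : WithBot ℕ) ∧ mfiR T P v i = (r : WithTop ℕ) := by
  have hex : ∃ ℓ' r', IsMinFixedInterval T P v i ℓ' r' := ⟨ℓ, r, hm⟩
  have hspec := hex.choose_spec.choose_spec
  obtain ⟨e1, e2⟩ := minFI_unique hT hQ hspec hm
  constructor
  · rw [mfiL, dif_pos hex, e1]
  · rw [mfiR, dif_pos hex, e2]

lemma exists_of_mfiR_ne_top {T P : List ℤ} {v i : ℕ} (h : mfiR T P v i ≠ ⊤) :
    ∃ ℓ r, IsMinFixedInterval T P v i ℓ r := by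
  by_contra hcon
  rw [mfiR, dif_neg hcon] at h
  exact h rfl

/-- Splitting off the left half of a fixed interval for pivot `(v,i)`. -/
lemma FI_split {T P : List ℤ} (hT : T.Nodup) (hP : P.Nodup) {v u i ℓ r : ℕ}
    (hv1 : 1 ≤ v) (hv2 : v ≤ P.length) (hu : leftChild P v = some u)
    (hfi : IsFixedInterval T P v i ℓ r) :
    ∃ j, 1 ≤ j ∧ j ≤ T.length ∧ val T i < val T j ∧
      IsFixedInterval T P u j ℓ (i - 1) := by
  have hQv := Psub_ne_nil hv1 hv2
  obtain ⟨hk1, htake, hu1, huP, hQune⟩ := Psub_structure hP hv1 hv2 hu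
  obtain ⟨A, B, h2, h3, h4, h5, h6, h7, h8, h9, h10, h11, h12, h13, hlenA, hi, hpiv⟩ :=
    FI_decomp hT hQv hfi
  have hAne : A ≠ [] := by intro h; rw [h] at hlenA; simp at hlenA; omega
  have hAv : seqAt T A ≠ [] := by simp [seqAt, hAne]
  obtain ⟨j, hjA, hjval⟩ := List.mem_map.mp (minval_mem hAv)
  have hlenQu : (Psub P u).length = minidx0 (Psub P v) := by
    rw [← htake, List.length_take]
    exact Nat.min_eq_left (le_of_lt (minidx0_lt_length hQv))
  refine ⟨j, (h10 j hjA).1, (h10 j hjA).2, h6 j hjA, ?_⟩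
  refine ⟨hfi.1, by omega, A, ⟨by omega, h8, h10⟩, hjA, ?_, ?_, hjval⟩
  · intro a ha
    have := h12 a ha
    have := h4 a ha
    omega
  · rw [← htake]
    exact h2

/-- Joining a left fixed interval with the pivot and right half. -/
lemma FI_join {T P : List ℤ} (hT : T.Nodup) (hP : P.Nodup) {v u i ℓ r ℓ' r' j : ℕ}
    (hv1 : 1 ≤ v) (hv2 : v ≤ P.length) (hu : leftChild P v = some u)
    (hfi : IsFixedInterval T P v i ℓ r)
    (hfj : IsFixedInterval T P u j ℓ' r') (hri : r' < i) (hij : val T i < val T j) :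
    IsFixedInterval T P v i ℓ' r := by
  have hQv := Psub_ne_nil hv1 hv2
  obtain ⟨hk1, htake, hu1, huP, hQune⟩ := Psub_structure hP hv1 hv2 hu
  obtain ⟨A0, B0, g2, g3, g4, g5, g6, g7, g8, g9, g10, g11, g12, g13, glen, hi0, hpiv0⟩ :=
    FI_decomp hT hQv hfi
  obtain ⟨hl', hr', J, ⟨hJlen, hJsort, hJbnd⟩, hjJ, hJint, hJct, hJmin⟩ := hfj
  have hjb := hJint j hjJ
  have hJval : ∀ a ∈ J, val T i < val T a := by
    intro a ha
    have hm : minval (seqAt T J) ≤ val T a := minval_le (by simp [seqAt]; exact ⟨a, ha, rfl⟩)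
    rw [← hJmin] at hm
    exact lt_of_lt_of_le hij hm
  refine FI_comp hQv (A := J) (B := B0) ?_ g3 ?_ g5 hJval g7 hJsort g9 hJbnd g11 ?_ ?_
    hi0 (by omega) hpiv0.2 hl' hfi.2.1
  · rw [← htake] at hJct
    exact hJct
  · intro a ha
    have := (hJint a ha).2
    omega
  · intro a ha
    have := hJint a ha
    have := hpiv0.2
    omega
  · intro b hb
    have := g13 b hb
    have := g5 b hb
    omega

/-- If `v` has a left child `u = v.L` and `mfi(v,i) ≠ [-∞,∞]`, then
`L(v, i) = max { ℓ : [ℓ, r] ∈ LFI'(v, i), r < i }`: the left endpoint of the minimal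
fixed-interval with pivot `(v, i)` is attained among the inclusion-minimal intervals of
`LFI(v, i)` whose right endpoint is less than `i`, and it is the maximum of their left
endpoints. -/
theorem L_eq_max_LFIMin
    (T P : List ℤ) (hT : T.Nodup) (hP : P.Nodup)
    (hm : 1 ≤ P.length) (hmn : P.length ≤ T.length)
    (v i : ℕ) (hv : 1 ≤ v ∧ v ≤ P.length) (hi : 1 ≤ i ∧ i ≤ T.length)
    (u : ℕ) (hu : leftChild P v = some u)
    (hex : ∃ ℓ r, IsMinFixedInterval T P v i ℓ r) :
    (∃ r, (mfiL T P v i, r) ∈ LFIMin T P u i ∧ r < (i : WithTop ℕ)) ∧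
    (∀ p ∈ LFIMin T P u i, p.2 < (i : WithTop ℕ) → p.1 ≤ mfiL T P v i) := by
    classical
    obtain ⟨ℓ0, r0, hm0⟩ := hex
    have hQv := Psub_ne_nil hv.1 hv.2
    obtain ⟨hk1, htake, hu1, huP, hQune⟩ := Psub_structure hP hv.1 hv.2 hu
    obtain ⟨hLv, hRv⟩ := mfi_eq hT hQv hm0
    have hfi0 := hm0.1
    -- core of the second bullet
    have hB2 : ∀ j ℓ' r', val T i < val T j →
        IsMinFixedInterval T P u j ℓ' r' → r' < i → ℓ' ≤ ℓ0 := by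
      intro j ℓ' r' hij hmj hri
      have hjoin := FI_join hT hP hv.1 hv.2 hu hfi0 hmj.1 hri hij
      exact (minFI_subset hT hQv hm0 hjoin).1
    -- existence of a candidate
    obtain ⟨j0, hj01, hj02, hij0, hfj0⟩ := FI_split hT hP hv.1 hv.2 hu hfi0
    obtain ⟨ℓ1, r1, hm1⟩ := exists_minFI hfj0
    obtain ⟨hsub1, hsub2⟩ := minFI_subset hT hQune hm1 hfj0
    have hr1i : r1 < i := by
      have := hi.1
      omega
    have hℓ1 : ℓ1 = ℓ0 := le_antisymm (hB2 j0 ℓ1 r1 hij0 hm1 hr1i) hsub1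
    subst hℓ1
    -- choose the candidate with least right endpoint
    have hSex : ∃ ρ, ∃ j, 1 ≤ j ∧ j ≤ T.length ∧ val T i < val T j ∧
        IsMinFixedInterval T P u j ℓ1 ρ ∧ ρ < i := ⟨r1, j0, hj01, hj02, hij0, hm1, hr1i⟩
    obtain ⟨j2, hj21, hj22, hij2, hmj2, hρi⟩ := Nat.find_spec hSex
    set ρ0 := Nat.find hSex with hρ0def
    obtain ⟨hL2, hR2⟩ := mfi_eq hT hQune hmj2
    constructor
    · refine ⟨(ρ0 : WithTop ℕ), ⟨⟨j2, hj21, hj22, hij2, by rw [hLv, hL2, hR2]⟩, ?_⟩, ?_⟩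
      · rintro ⟨q, hqLFI, hq1, hq2, hqne⟩
        obtain ⟨j3, hj31, hj32, hij3, rfl⟩ := hqLFI
        simp only at hq1 hq2
        have hne3 : mfiR T P u j3 ≠ ⊤ := by
          intro h
          rw [h] at hq2
          rw [top_le_iff] at hq2
          exact absurd hq2 (by simp)
        obtain ⟨ℓ3, r3, hmj3⟩ := exists_of_mfiR_ne_top hne3
        obtain ⟨hL3, hR3⟩ := mfi_eq hT hQune hmj3
        rw [hR3] at hq2
        have hr3ρ : r3 ≤ ρ0 := by exact_mod_cast hq2
        have hr3i : r3 < i := by omega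
        rw [hLv, hL3] at hq1
        have hℓ3 : ℓ1 ≤ ℓ3 := by exact_mod_cast hq1
        have hℓ3' : ℓ3 = ℓ1 := le_antisymm (hB2 j3 ℓ3 r3 hij3 hmj3 hr3i) hℓ3
        subst hℓ3'
        have hr3ne : r3 ≠ ρ0 := by
          intro h
          subst h
          exact hqne (by rw [hLv, hL3, hR3])
        have hr3lt : r3 < ρ0 := by omega
        exact Nat.find_min hSex hr3lt ⟨j3, hj31, hj32, hij3, hmj3, hr3i⟩
      · exact_mod_cast hρi
    · intro p hp hpi
      obtain ⟨hpLFI, _⟩ := hp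
      obtain ⟨j', hj1', hj2', hij', rfl⟩ := hpLFI
      simp only at hpi ⊢
      have hne' : mfiR T P u j' ≠ ⊤ := by
        intro h
        rw [h] at hpi
        exact absurd hpi (by simp)
      obtain ⟨ℓ', r', hmj'⟩ := exists_of_mfiR_ne_top hne'
      obtain ⟨hL', hR'⟩ := mfi_eq hT hQune hmj'
      rw [hR'] at hpi
      have hri' : r' < i := by exact_mod_cast hpi
      have := hB2 j' ℓ' r' hij' hmj' hri'
      rw [hLv, hL']
      exact_mod_cast this
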